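/- Let S₁,…,S_k be a partition of [n] with |S_i| = t_i ≥ 1, let f : 2^[n] → ℝ be a block function with cardinality representation F (i.e., f(S) = F(|S∩S₁|,…,|S∩S_k|)), and let g : 2^[n] → ℝ be any submodular function. Then max_{S⊆[n]} |f(S) − g(S)| ≥ ν(f), where ν(f) = (1/2)·(∏_{j=1}^k (t_j−1)/t_j)·F(0,…,0) + Σ_{i=1}^k ( (∏_{j=i+1}^k (t_j−1)/t_j)/(2t_i) )·F(1,…,1,t_i,0,…,0) − (1/2)·F(1,…,1), where F(1,…,1,t_i,0,…,0) has i−1 leading 1's, then t_i, then k−i trailing 0's. -/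

import Mathlib

open Finset

private lemma aux_div (T a Q G : ℝ) (hT : 0 < T) (h : a + (T - 1) * Q ≤ T * G) :
    1 / T * a + (T - 1) / T * Q ≤ G := by
  rw [div_mul_eq_mul_div, div_mul_eq_mul_div, one_mul, ← add_div, div_le_iff₀ hT]
  linarith

theorem stmt_5 (n k : ℕ) (hk : 0 < k)
    (S : Fin k → Finset (Fin n)) (t : Fin k → ℕ)
    (hcard : ∀ i, (S i).card = t i) (ht : ∀ i, 1 ≤ t i)
    (hdisj : ∀ i j, i ≠ j → Disjoint (S i) (S j))
    (hcover : Finset.univ.biUnion S = Finset.univ)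
    (F : (Fin k → ℕ) → ℝ)
    (f : Finset (Fin n) → ℝ)
    (hf : ∀ A, f A = F (fun i => (A ∩ S i).card))
    (g : Finset (Fin n) → ℝ)
    (hg : ∀ A B : Finset (Fin n), g A + g B ≥ g (A ∪ B) + g (A ∩ B)) :
    ∃ A : Finset (Fin n), |f A - g A| ≥
      (1/2) * (∏ j, ((t j : ℝ) - 1) / (t j)) * F (fun _ => 0)
      + ∑ i, ((∏ j ∈ Finset.univ.filter (fun j => i < j), ((t j : ℝ) - 1) / (t j)) / (2 * (t i : ℝ)))
          * F (fun j => if j < i then 1 else if j = i then t i else 0)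
      - (1/2) * F (fun _ => 1) := by
  by_contra hcon
  push_neg at hcon
  set ν := (1/2) * (∏ j, ((t j : ℝ) - 1) / (t j)) * F (fun _ => 0)
      + ∑ i, ((∏ j ∈ Finset.univ.filter (fun j => i < j), ((t j : ℝ) - 1) / (t j)) / (2 * (t i : ℝ)))
          * F (fun j => if j < i then 1 else if j = i then t i else 0)
      - (1/2) * F (fun _ => 1) with hνdef
  clear_value ν
  have habs : ∀ A, f A - ν < g A ∧ g A < f A + ν := by
    intro A
    have h := abs_lt.mp (hcon A)
    exact ⟨by linarith [h.1], by linarith [h.2]⟩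
  -- submodular subadditivity of marginals
  have hsub : ∀ (B X : Finset (Fin n)),
      g (B ∪ X) + ((X.card : ℝ) - 1) * g B ≤ ∑ x ∈ X, g (B ∪ {x}) := by
    intro B X
    induction X using Finset.induction_on with
    | empty => simp
    | @insert a X ha ih =>
      rw [Finset.sum_insert ha, Finset.card_insert_of_notMem ha]
      have h1 := hg (B ∪ {a}) (B ∪ X)
      have h2 : (B ∪ {a}) ∪ (B ∪ X) = B ∪ insert a X := by
        ext y
        simp only [Finset.mem_union, Finset.mem_singleton, Finset.mem_insert]
        tauto
      have h3 : (B ∪ {a}) ∩ (B ∪ X) = B := by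
        ext y
        simp only [Finset.mem_inter, Finset.mem_union, Finset.mem_singleton]
        constructor
        · rintro ⟨hy1 | rfl, hy2 | hy2⟩
          · exact hy1
          · exact hy1
          · exact hy2
          · exact absurd hy2 ha
        · intro hy; exact ⟨Or.inl hy, Or.inl hy⟩
      rw [h2, h3] at h1
      push_cast
      linarith
  have htR : ∀ j : Fin k, (1:ℝ) ≤ (t j : ℝ) := fun j => by exact_mod_cast ht j
  -- coefficient-sum lemma
  have coeff : ∀ i : ℕ, i ≤ k →
      (∏ j ∈ univ.filter (fun j : Fin k => (j:ℕ) < i), ((t j : ℝ) - 1) / (t j))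
      + ∑ j ∈ univ.filter (fun j : Fin k => (j:ℕ) < i),
          (∏ l ∈ univ.filter (fun l : Fin k => j < l ∧ (l:ℕ) < i), ((t l : ℝ) - 1) / (t l)) / (t j)
      = 1 := by
    intro i
    induction i with
    | zero =>
      intro _
      have h0 : univ.filter (fun j : Fin k => (j:ℕ) < 0) = ∅ := by
        ext j; simp
      rw [h0]; simp
    | succ i ih =>
      intro hik'
      have hik : i < k := hik'
      have ihv := ih (le_of_lt hik)
      have h1 : univ.filter (fun j : Fin k => (j:ℕ) < i+1)
          = insert (⟨i, hik⟩ : Fin k) (univ.filter (fun j : Fin k => (j:ℕ) < i)) := by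
        ext j
        simp only [mem_filter, mem_univ, true_and, mem_insert, Fin.ext_iff, Fin.val_mk]
        omega
      have hnotmem : (⟨i, hik⟩ : Fin k) ∉ univ.filter (fun j : Fin k => (j:ℕ) < i) := by
        simp
      rw [h1, Finset.prod_insert hnotmem, Finset.sum_insert hnotmem]
      have h2 : univ.filter (fun l : Fin k => (⟨i, hik⟩ : Fin k) < l ∧ (l:ℕ) < i+1) = ∅ := by
        ext l
        simp only [mem_filter, mem_univ, true_and, Fin.lt_def, Fin.val_mk, notMem_empty,
          iff_false, not_and]
        omega
      have h4 : ∑ j ∈ univ.filter (fun j : Fin k => (j:ℕ) < i),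
          (∏ l ∈ univ.filter (fun l : Fin k => j < l ∧ (l:ℕ) < i+1), ((t l : ℝ) - 1) / (t l)) / (t j)
          = ((t (⟨i, hik⟩ : Fin k) : ℝ) - 1) / (t (⟨i, hik⟩ : Fin k))
            * ∑ j ∈ univ.filter (fun j : Fin k => (j:ℕ) < i),
              (∏ l ∈ univ.filter (fun l : Fin k => j < l ∧ (l:ℕ) < i), ((t l : ℝ) - 1) / (t l)) / (t j) := by
        rw [Finset.mul_sum]
        refine Finset.sum_congr rfl (fun j hj => ?_)
        simp only [mem_filter, mem_univ, true_and] at hj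
        have hins : univ.filter (fun l : Fin k => j < l ∧ (l:ℕ) < i+1)
            = insert (⟨i, hik⟩ : Fin k) (univ.filter (fun l : Fin k => j < l ∧ (l:ℕ) < i)) := by
          ext l
          simp only [mem_filter, mem_univ, true_and, mem_insert, Fin.ext_iff, Fin.lt_def,
            Fin.val_mk]
          omega
        have hnot2 : (⟨i, hik⟩ : Fin k) ∉ univ.filter (fun l : Fin k => j < l ∧ (l:ℕ) < i) := by
          simp only [mem_filter, mem_univ, true_and, Fin.lt_def, Fin.val_mk, not_and]
          omega
        rw [hins, Finset.prod_insert hnot2]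
        ring
      rw [h2, h4, Finset.prod_empty]
      have hT := htR (⟨i, hik⟩ : Fin k)
      have hT0 : (t (⟨i, hik⟩ : Fin k) : ℝ) ≠ 0 := by linarith
      have hr1 : ((t (⟨i, hik⟩ : Fin k) : ℝ) - 1) / (t (⟨i, hik⟩ : Fin k))
          + 1 / (t (⟨i, hik⟩ : Fin k) : ℝ) = 1 := by
        field_simp
        ring
      linear_combination (((t (⟨i, hik⟩ : Fin k) : ℝ) - 1) / (t (⟨i, hik⟩ : Fin k))) * ihv + hr1
  -- main induction
  have key : ∀ i : ℕ, i ≤ k → ∃ B : Finset (Fin n),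
      (∀ j : Fin k, (B ∩ S j).card = if (j:ℕ) < i then 1 else 0) ∧
      (∏ j ∈ univ.filter (fun j : Fin k => (j:ℕ) < i), ((t j : ℝ) - 1) / (t j)) * (F (fun _ => 0) - ν)
      + ∑ j ∈ univ.filter (fun j : Fin k => (j:ℕ) < i),
          ((∏ l ∈ univ.filter (fun l : Fin k => j < l ∧ (l:ℕ) < i), ((t l : ℝ) - 1) / (t l)) / (t j))
            * (F (fun m => if m < j then 1 else if m = j then t j else 0) - ν)
      ≤ g B := by
    intro i
    induction i with
    | zero =>
      intro _
      refine ⟨∅, fun j => by simp, ?_⟩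
      have h0 : univ.filter (fun j : Fin k => (j:ℕ) < 0) = ∅ := by
        ext j; simp
      rw [h0]
      simp only [Finset.prod_empty, Finset.sum_empty, one_mul, add_zero]
      have h1 := (habs ∅).1
      have hf0 : f ∅ = F (fun _ => 0) := by
        rw [hf]; exact congrArg F (funext fun m => by simp)
      linarith [h1, hf0.le, hf0.ge]
    | succ i ih =>
      intro hik'
      have hik : i < k := hik'
      obtain ⟨B, hB, hgB⟩ := ih (le_of_lt hik)
      have hBι : B ∩ S ⟨i, hik⟩ = ∅ := by
        have h := hB ⟨i, hik⟩
        simp only [Fin.val_mk, lt_irrefl, if_false] at h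
        exact Finset.card_eq_zero.mp h
      have hSne : (S (⟨i, hik⟩ : Fin k)).Nonempty := by
        rw [← Finset.card_pos, hcard]
        exact ht _
      obtain ⟨x, hx, hxmax⟩ := Finset.exists_max_image (S ⟨i, hik⟩) (fun y => g (B ∪ {y})) hSne
      have hsumle : ∑ y ∈ S ⟨i, hik⟩, g (B ∪ {y}) ≤ (t (⟨i, hik⟩ : Fin k) : ℝ) * g (B ∪ {x}) := by
        have h := Finset.sum_le_card_nsmul (S ⟨i, hik⟩) (fun y => g (B ∪ {y})) (g (B ∪ {x}))
          (fun y hy => hxmax y hy)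
        rw [hcard] at h
        simpa [nsmul_eq_mul] using h
      have hsum' := hsub B (S ⟨i, hik⟩)
      rw [hcard] at hsum'
      -- the f-value of B ∪ S ι
      have hcardA : ∀ m : Fin k, ((B ∪ S ⟨i, hik⟩) ∩ S m).card
          = if m < (⟨i, hik⟩ : Fin k) then 1 else if m = ⟨i, hik⟩ then t ⟨i, hik⟩ else 0 := by
        intro m
        rw [Finset.union_inter_distrib_right]
        by_cases hm : m = ⟨i, hik⟩
        · subst hm
          rw [Finset.inter_self, hBι, Finset.empty_union, hcard]
          simp
        · have hd : S (⟨i, hik⟩ : Fin k) ∩ S m = ∅ :=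
            Finset.disjoint_iff_inter_eq_empty.mp (hdisj _ _ (fun h => hm h.symm))
          rw [hd, Finset.union_empty, hB m]
          have hmv : (m:ℕ) ≠ i := fun h => hm (Fin.ext h)
          by_cases h' : (m:ℕ) < i
          · rw [if_pos h', if_pos (show m < (⟨i, hik⟩ : Fin k) from by
              simpa [Fin.lt_def] using h')]
          · rw [if_neg h', if_neg (show ¬ m < (⟨i, hik⟩ : Fin k) from by
              simpa [Fin.lt_def] using h'), if_neg hm]
      have hfA : f (B ∪ S ⟨i, hik⟩)
          = F (fun m => if m < (⟨i, hik⟩ : Fin k) then 1 else if m = ⟨i, hik⟩ then t ⟨i, hik⟩ else 0) := by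
        rw [hf]; exact congrArg F (funext fun m => hcardA m)
      have hgA : F (fun m => if m < (⟨i, hik⟩ : Fin k) then 1 else if m = ⟨i, hik⟩ then t ⟨i, hik⟩ else 0) - ν
          ≤ g (B ∪ S ⟨i, hik⟩) := by
        have h := (habs (B ∪ S ⟨i, hik⟩)).1
        rw [hfA] at h
        linarith
      refine ⟨B ∪ {x}, ?_, ?_⟩
      · intro j
        rw [Finset.union_inter_distrib_right]
        by_cases hj : j = ⟨i, hik⟩
        · subst hj
          rw [hBι, Finset.empty_union, Finset.singleton_inter_of_mem hx]
          simp
        · have hxj : x ∉ S j := fun hxj =>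
            (Finset.disjoint_left.mp (hdisj _ _ (fun h => hj h.symm)) hx) hxj
          rw [Finset.singleton_inter_of_notMem hxj, Finset.union_empty, hB j]
          have hjv : (j:ℕ) ≠ i := fun h => hj (Fin.ext h)
          by_cases h' : (j:ℕ) < i
          · rw [if_pos h', if_pos (by omega)]
          · rw [if_neg h', if_neg (by omega)]
      · -- the inequality
        have hT := htR (⟨i, hik⟩ : Fin k)
        have hTpos : (0:ℝ) < (t (⟨i, hik⟩ : Fin k) : ℝ) := by linarith
        have hmono := mul_le_mul_of_nonneg_left hgB
          (by linarith : (0:ℝ) ≤ (t (⟨i, hik⟩ : Fin k) : ℝ) - 1)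
        have step2 :
            1 / (t (⟨i, hik⟩ : Fin k) : ℝ) *
              (F (fun m => if m < (⟨i, hik⟩ : Fin k) then 1 else if m = ⟨i, hik⟩ then t ⟨i, hik⟩ else 0) - ν)
            + ((t (⟨i, hik⟩ : Fin k) : ℝ) - 1) / (t (⟨i, hik⟩ : Fin k)) *
              ((∏ j ∈ univ.filter (fun j : Fin k => (j:ℕ) < i), ((t j : ℝ) - 1) / (t j)) * (F (fun _ => 0) - ν)
              + ∑ j ∈ univ.filter (fun j : Fin k => (j:ℕ) < i),
                  ((∏ l ∈ univ.filter (fun l : Fin k => j < l ∧ (l:ℕ) < i), ((t l : ℝ) - 1) / (t l)) / (t j))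
                    * (F (fun m => if m < j then 1 else if m = j then t j else 0) - ν))
            ≤ g (B ∪ {x}) := by
          exact aux_div _ _ _ _ hTpos
            (le_trans (add_le_add hgA hmono) (le_trans hsum' hsumle))
        -- rewrite the goal into the shape of step2
        have h1 : univ.filter (fun j : Fin k => (j:ℕ) < i+1)
            = insert (⟨i, hik⟩ : Fin k) (univ.filter (fun j : Fin k => (j:ℕ) < i)) := by
          ext j
          simp only [mem_filter, mem_univ, true_and, mem_insert, Fin.ext_iff, Fin.val_mk]
          omega
        have hnotmem : (⟨i, hik⟩ : Fin k) ∉ univ.filter (fun j : Fin k => (j:ℕ) < i) := by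
          simp
        rw [h1, Finset.prod_insert hnotmem, Finset.sum_insert hnotmem]
        have h2 : univ.filter (fun l : Fin k => (⟨i, hik⟩ : Fin k) < l ∧ (l:ℕ) < i+1) = ∅ := by
          ext l
          simp only [mem_filter, mem_univ, true_and, Fin.lt_def, Fin.val_mk, notMem_empty,
            iff_false, not_and]
          omega
        have h4 : ∑ j ∈ univ.filter (fun j : Fin k => (j:ℕ) < i),
            ((∏ l ∈ univ.filter (fun l : Fin k => j < l ∧ (l:ℕ) < i+1), ((t l : ℝ) - 1) / (t l)) / (t j))
              * (F (fun m => if m < j then 1 else if m = j then t j else 0) - ν)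
            = ((t (⟨i, hik⟩ : Fin k) : ℝ) - 1) / (t (⟨i, hik⟩ : Fin k))
              * ∑ j ∈ univ.filter (fun j : Fin k => (j:ℕ) < i),
                ((∏ l ∈ univ.filter (fun l : Fin k => j < l ∧ (l:ℕ) < i), ((t l : ℝ) - 1) / (t l)) / (t j))
                  * (F (fun m => if m < j then 1 else if m = j then t j else 0) - ν) := by
          rw [Finset.mul_sum]
          refine Finset.sum_congr rfl (fun j hj => ?_)
          simp only [mem_filter, mem_univ, true_and] at hj
          have hins : univ.filter (fun l : Fin k => j < l ∧ (l:ℕ) < i+1)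
              = insert (⟨i, hik⟩ : Fin k) (univ.filter (fun l : Fin k => j < l ∧ (l:ℕ) < i)) := by
            ext l
            simp only [mem_filter, mem_univ, true_and, mem_insert, Fin.ext_iff, Fin.lt_def,
              Fin.val_mk]
            omega
          have hnot2 : (⟨i, hik⟩ : Fin k) ∉ univ.filter (fun l : Fin k => j < l ∧ (l:ℕ) < i) := by
            simp only [mem_filter, mem_univ, true_and, Fin.lt_def, Fin.val_mk, not_and]
            omega
          rw [hins, Finset.prod_insert hnot2]
          ring
        rw [h2, h4, Finset.prod_empty]
        linarith [step2]
  -- conclude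
  obtain ⟨B, hB, hgB⟩ := key k le_rfl
  have hub : g B < F (fun _ => 1) + ν := by
    have h2 := (habs B).2
    have hfB : f B = F (fun _ => 1) := by
      rw [hf]; exact congrArg F (funext fun m => by rw [hB m, if_pos m.isLt])
    rw [hfB] at h2
    exact h2
  have hc := coeff k le_rfl
  have hfiltk : univ.filter (fun j : Fin k => (j:ℕ) < k) = univ := by
    ext j; simpa using j.isLt
  rw [hfiltk] at hgB hc
  have hfilt2 : ∀ j : Fin k, (univ.filter (fun l : Fin k => j < l ∧ (l:ℕ) < k))
      = univ.filter (fun l : Fin k => j < l) := by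
    intro j
    ext l
    simp only [mem_filter, mem_univ, true_and, and_iff_left_iff_imp]
    exact fun _ => l.isLt
  have esum1 : (∑ j, ((∏ l ∈ univ.filter (fun l : Fin k => j < l ∧ (l:ℕ) < k), ((t l : ℝ) - 1) / (t l)) / (t j))
          * (F (fun m => if m < j then 1 else if m = j then t j else 0) - ν))
      = ∑ j, ((∏ l ∈ univ.filter (fun l : Fin k => j < l), ((t l : ℝ) - 1) / (t l)) / (t j))
          * (F (fun m => if m < j then 1 else if m = j then t j else 0) - ν) :=
    Finset.sum_congr rfl (fun j _ => by rw [hfilt2 j])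
  have esum2 : (∑ j, (∏ l ∈ univ.filter (fun l : Fin k => j < l ∧ (l:ℕ) < k), ((t l : ℝ) - 1) / (t l)) / (t j))
      = ∑ j, (∏ l ∈ univ.filter (fun l : Fin k => j < l), ((t l : ℝ) - 1) / (t l)) / (t j) :=
    Finset.sum_congr rfl (fun j _ => by rw [hfilt2 j])
  rw [esum1] at hgB
  rw [esum2] at hc
  have hgB' := hgB
  have hc' := hc
  have hsplit : ∑ j, ((∏ l ∈ univ.filter (fun l : Fin k => j < l), ((t l : ℝ) - 1) / (t l)) / (t j))
          * (F (fun m => if m < j then 1 else if m = j then t j else 0) - ν)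
      = (∑ j, ((∏ l ∈ univ.filter (fun l : Fin k => j < l), ((t l : ℝ) - 1) / (t l)) / (t j))
          * F (fun m => if m < j then 1 else if m = j then t j else 0))
        - (∑ j, (∏ l ∈ univ.filter (fun l : Fin k => j < l), ((t l : ℝ) - 1) / (t l)) / (t j)) * ν := by
    rw [Finset.sum_mul, ← Finset.sum_sub_distrib]
    exact Finset.sum_congr rfl (fun j _ => by ring)
  have hν2 : ∑ i, ((∏ j ∈ Finset.univ.filter (fun j => i < j), ((t j : ℝ) - 1) / (t j)) / (2 * (t i : ℝ)))
          * F (fun j => if j < i then 1 else if j = i then t i else 0)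
      = (1/2) * ∑ j, ((∏ l ∈ univ.filter (fun l : Fin k => j < l), ((t l : ℝ) - 1) / (t l)) / (t j))
          * F (fun m => if m < j then 1 else if m = j then t j else 0) := by
    rw [Finset.mul_sum]
    exact Finset.sum_congr rfl (fun j _ => by ring)
  rw [hsplit] at hgB'
  rw [hν2] at hνdef
  have hmul : (∏ j, ((t j : ℝ) - 1) / (t j)) * ν
      + (∑ j, (∏ l ∈ univ.filter (fun l : Fin k => j < l), ((t l : ℝ) - 1) / (t l)) / (t j)) * ν
      = ν := by
    calc (∏ j, ((t j : ℝ) - 1) / (t j)) * ν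
        + (∑ j, (∏ l ∈ univ.filter (fun l : Fin k => j < l), ((t l : ℝ) - 1) / (t l)) / (t j)) * ν
        = ((∏ j, ((t j : ℝ) - 1) / (t j))
          + ∑ j, (∏ l ∈ univ.filter (fun l : Fin k => j < l), ((t l : ℝ) - 1) / (t l)) / (t j)) * ν := by
          ring
      _ = ν := by rw [hc', one_mul]
  linarith [hgB', hub, hmul, hνdef.ge, hνdef.le]
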